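/- Let 0 < λ < 1. Then the sum S_n = Σ_{k=1}^{n-1} λ^{n-1-k}/k satisfies S_n = 1/((1-λ)n) + O(1/n²); more precisely there exists a constant C(λ) such that |S_n - 1/((1-λ)n)| ≤ C(λ)/n² for all n ≥ 2. -/

import Mathlib

open Finset

/-- Summation estimate for the stable direction:
`Σ_{k=1}^{n-1} λ^{n-1-k}/k = 1/((1-λ)n) + O(1/n²)` for `0 < λ < 1`. -/
theorem stmt12 (lam : ℝ) (hlam0 : 0 < lam) (hlam1 : lam < 1) :
    ∃ C : ℝ, ∀ n : ℕ, 2 ≤ n →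
      |(∑ k ∈ Finset.Icc 1 (n - 1), lam ^ (n - 1 - k) / (k : ℝ))
          - 1 / ((1 - lam) * n)| ≤ C / (n : ℝ) ^ 2 := by
  have hs : 0 < 1 - lam := by linarith
  -- geometric sum bound
  have hg : ∀ m : ℕ, ∑ i ∈ range m, lam ^ i ≤ 1 / (1 - lam) := by
    intro m
    rw [le_div_iff₀ hs]
    have h1 := geom_sum_mul lam m
    have hp : (0:ℝ) ≤ lam ^ m := by positivity
    nlinarith [h1]
  -- pointwise bound (m+1) λ^m ≤ 1/(1-λ)
  have hpt : ∀ m : ℕ, ((m : ℝ) + 1) * lam ^ m ≤ 1 / (1 - lam) := by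
    intro m
    have h1 : ((m : ℝ) + 1) * lam ^ m = ∑ _i ∈ range (m + 1), lam ^ m := by
      rw [Finset.sum_const, card_range, nsmul_eq_mul]
      push_cast; ring
    rw [h1]
    refine le_trans (Finset.sum_le_sum fun i hi => ?_) (hg (m+1))
    exact pow_le_pow_of_le_one hlam0.le hlam1.le (by simp at hi; omega)
  -- summability of (j+1)² λ^j
  have hr : ‖lam‖ < 1 := by rw [Real.norm_eq_abs, abs_of_pos hlam0]; exact hlam1
  have hsum : Summable (fun j : ℕ => ((j:ℝ)+1)^2 * lam^j) := by
    have h2 := summable_pow_mul_geometric_of_norm_lt_one (R := ℝ) 2 hr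
    have h1 := summable_pow_mul_geometric_of_norm_lt_one (R := ℝ) 1 hr
    have h0 := summable_pow_mul_geometric_of_norm_lt_one (R := ℝ) 0 hr
    refine ((h2.add ((h1.mul_left 2).add h0)).congr fun j => ?_)
    ring
  set K : ℝ := ∑' j : ℕ, ((j:ℝ)+1)^2 * lam^j with hKdef
  have hK : ∀ s : Finset ℕ, ∑ j ∈ s, ((j:ℝ)+1)^2 * lam^j ≤ K :=
    fun s => Summable.sum_le_tsum s (fun i _ => by positivity) hsum
  refine ⟨2 * K + 1 / (1 - lam)^2, ?_⟩
  intro n hn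
  obtain ⟨N, rfl⟩ : ∃ N, n = N + 1 := ⟨n - 1, by omega⟩
  have hN : 1 ≤ N := by omega
  simp only [Nat.add_sub_cancel]
  have hB : (0:ℝ) < (N:ℝ) + 1 := by positivity
  -- reindexing lemma
  have hre : ∀ f : ℕ → ℝ, ∑ k ∈ Icc 1 N, f k = ∑ j ∈ range N, f (N - j) := by
    intro f
    refine Finset.sum_nbij' (fun k => N - k) (fun j => N - j) ?_ ?_ ?_ ?_ ?_ <;>
      intro a ha <;> simp only [mem_Icc, mem_range] at * <;>
      first
        | omega
        | (congr 1; omega)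
  set S : ℝ := ∑ k ∈ Icc 1 N, lam ^ (N - k) / (k : ℝ) with hSdef
  set T : ℝ := ∑ k ∈ Icc 1 N, lam ^ (N - k) / ((N:ℝ) + 1) with hTdef
  -- the geometric part
  have hGre : ∑ k ∈ Icc 1 N, lam ^ (N - k) = ∑ j ∈ range N, lam ^ j := by
    rw [hre fun k => lam ^ (N - k)]
    refine Finset.sum_congr rfl fun j hj => ?_
    simp only [mem_range] at hj
    congr 1; omega
  have hGid : (1 - lam) * (∑ j ∈ range N, lam ^ j) = 1 - lam ^ N := by
    have := geom_sum_mul lam N; nlinarith [this]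
  have hTid : 1 / ((1 - lam) * ((N:ℝ) + 1)) - T = lam ^ N / ((1 - lam) * ((N:ℝ) + 1)) := by
    have hT : T = (∑ j ∈ range N, lam ^ j) / ((N:ℝ) + 1) := by
      rw [hTdef, ← Finset.sum_div, hGre]
    have hGval : (∑ j ∈ range N, lam ^ j) = (1 - lam ^ N) / (1 - lam) := by
      rw [eq_div_iff hs.ne']; linarith [hGid]
    rw [hT, hGval]
    field_simp; ring
  -- bound on S - T
  have hQ : ∑ k ∈ Icc 1 N, ((N:ℝ) + 1 - k)^2 * lam ^ (N - k) ≤ K := by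
    rw [hre fun k => ((N:ℝ) + 1 - k)^2 * lam ^ (N - k)]
    refine le_trans (le_of_eq (Finset.sum_congr rfl fun j hj => ?_)) (hK (range N))
    simp only [mem_range] at hj
    have h1 : ((N - j : ℕ) : ℝ) = (N:ℝ) - j := by
      have : j ≤ N := by omega
      push_cast [this]; ring
    have h2 : N - (N - j) = j := by omega
    rw [h1, h2]; ring_nf
  have hST : S - T ≤ 2 * K / ((N:ℝ) + 1)^2 := by
    rw [hSdef, hTdef, ← Finset.sum_sub_distrib]
    have hstep : ∀ k ∈ Icc 1 N,
        lam ^ (N - k) / (k:ℝ) - lam ^ (N - k) / ((N:ℝ) + 1)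
          ≤ 2 * ((N:ℝ) + 1 - k)^2 * lam ^ (N - k) / ((N:ℝ) + 1)^2 := by
      intro k hk
      simp only [mem_Icc] at hk
      have hk1 : (1:ℝ) ≤ (k:ℝ) := by exact_mod_cast hk.1
      have hk2 : (k:ℝ) + 1 ≤ (N:ℝ) + 1 := by
        have : (k:ℝ) ≤ (N:ℝ) := by exact_mod_cast hk.2
        linarith
      have hp : (0:ℝ) ≤ lam ^ (N - k) := by positivity
      have hkpos : (0:ℝ) < (k:ℝ) := by linarith
      have heq : lam ^ (N - k) / (k:ℝ) - lam ^ (N - k) / ((N:ℝ) + 1)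
          = lam ^ (N - k) * ((N:ℝ) + 1 - k) / ((k:ℝ) * ((N:ℝ) + 1)) := by
        field_simp
      rw [heq, div_le_div_iff₀ (by positivity) (by positivity)]
      have hab : (N:ℝ) + 1 ≤ 2 * ((N:ℝ) + 1 - k) * k := by
        nlinarith [mul_nonneg (by linarith : (0:ℝ) ≤ (k:ℝ) - 1)
          (by linarith : (0:ℝ) ≤ (N:ℝ) - k)]
      have hpbB : (0:ℝ) ≤ lam ^ (N - k) * ((N:ℝ) + 1 - k) * ((N:ℝ) + 1) :=
        mul_nonneg (mul_nonneg hp (by linarith)) (by linarith)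
      have h3 := mul_le_mul_of_nonneg_left hab hpbB
      nlinarith [h3]
    refine le_trans (Finset.sum_le_sum hstep) ?_
    have : ∑ k ∈ Icc 1 N, 2 * ((N:ℝ) + 1 - k)^2 * lam ^ (N - k) / ((N:ℝ) + 1)^2
        = (2 / ((N:ℝ) + 1)^2) * ∑ k ∈ Icc 1 N, ((N:ℝ) + 1 - k)^2 * lam ^ (N - k) := by
      rw [Finset.mul_sum]
      refine Finset.sum_congr rfl fun k _ => ?_
      ring
    rw [this]
    calc (2 / ((N:ℝ) + 1)^2) * ∑ k ∈ Icc 1 N, ((N:ℝ) + 1 - k)^2 * lam ^ (N - k)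
        ≤ (2 / ((N:ℝ) + 1)^2) * K := by
          exact mul_le_mul_of_nonneg_left hQ (by positivity)
      _ = 2 * K / ((N:ℝ) + 1)^2 := by ring
  have hSTnn : 0 ≤ S - T := by
    rw [hSdef, hTdef, ← Finset.sum_sub_distrib]
    refine Finset.sum_nonneg fun k hk => ?_
    simp only [mem_Icc] at hk
    have hk1 : (0:ℝ) < (k:ℝ) := by exact_mod_cast hk.1
    have hk2 : (k:ℝ) ≤ (N:ℝ) + 1 := by
      have : (k:ℝ) ≤ (N:ℝ) := by exact_mod_cast hk.2
      linarith
    have hp : (0:ℝ) ≤ lam ^ (N - k) := by positivity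
    rw [sub_nonneg]
    gcongr
  have hfinal : S - 1 / ((1 - lam) * ((N:ℝ) + 1))
      = (S - T) - lam ^ N / ((1 - lam) * ((N:ℝ) + 1)) := by linarith [hTid]
  have hx : (0:ℝ) < (1 - lam) * ((N:ℝ) + 1) := by positivity
  have hlampow : lam ^ N * ((1 - lam) * ((N:ℝ) + 1)) ≤ 1 := by
    have h2 := mul_le_mul_of_nonneg_right (hpt N) hs.le
    rw [div_mul_cancel₀ _ hs.ne'] at h2
    nlinarith [h2]
  have hl2 : lam ^ N ≤ 1 / ((1 - lam) * ((N:ℝ) + 1)) := by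
    rw [le_div_iff₀ hx]; exact hlampow
  have hpow2 : lam ^ N / ((1 - lam) * ((N:ℝ) + 1))
      ≤ 1 / (1 - lam) ^ 2 / ((N:ℝ) + 1) ^ 2 := by
    calc lam ^ N / ((1 - lam) * ((N:ℝ) + 1))
        ≤ (1 / ((1 - lam) * ((N:ℝ) + 1))) / ((1 - lam) * ((N:ℝ) + 1)) := by gcongr
      _ = 1 / (1 - lam) ^ 2 / ((N:ℝ) + 1) ^ 2 := by field_simp
  have hcast : ((N + 1 : ℕ) : ℝ) = (N:ℝ) + 1 := by push_cast; ring
  rw [hcast]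
  calc |S - 1 / ((1 - lam) * ((N:ℝ) + 1))|
      = |(S - T) - lam ^ N / ((1 - lam) * ((N:ℝ) + 1))| := by rw [hfinal]
    _ ≤ |S - T| + |lam ^ N / ((1 - lam) * ((N:ℝ) + 1))| := abs_sub _ _
    _ = (S - T) + lam ^ N / ((1 - lam) * ((N:ℝ) + 1)) := by
        rw [abs_of_nonneg hSTnn, abs_of_nonneg (by positivity)]
    _ ≤ 2 * K / ((N:ℝ) + 1) ^ 2 + 1 / (1 - lam) ^ 2 / ((N:ℝ) + 1) ^ 2 := by
        exact add_le_add hST hpow2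
    _ = (2 * K + 1 / (1 - lam) ^ 2) / ((N:ℝ) + 1) ^ 2 := by ring
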